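/- For all r ≥ 1, all ζ > 0, all integers k ≥ 1, and all integers 1 ≤ ℓ ≤ j, taking ξ = −ζ one has c̃_{j,ℓ} ≤ κ̃₂^ℓ · (ζ/ρ)^{−j} · (j + ℓ − 1)! / ( ℓ! (ℓ−1)! j! ). (Lemma 3.12.) -/

import Mathlib

open MeasureTheory Finset

noncomputable section

/-- ρ = r^{d/2} -/
def rho (d : ℕ) (r : ℝ) : ℝ := r ^ ((d : ℝ) / 2)

/-- tilted cumulant coefficients κ̃_n = d₁ ∫₀¹ e^{ξu/ρ} u^{n-1-d/γ} du -/
def kt (d : ℕ) (γ r ξ : ℝ) (n : ℕ) : ℝ :=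
  (2 - (d : ℝ) / γ) *
    ∫ u in (0:ℝ)..1, Real.exp (ξ * u / rho d r) * u ^ ((n : ℝ) - 1 - (d : ℝ) / γ)

/-- c̃_{j,ℓ} = (1/ℓ!) ∑_{3 ≤ nᵢ ≤ k+2, ∑(nᵢ−2)=j} ∏ᵢ κ̃_{nᵢ}/nᵢ! -/
def ctilde (d : ℕ) (γ r ξ : ℝ) (k j l : ℕ) : ℝ :=
  (1 / (l.factorial : ℝ)) *
    ∑ n ∈ (Fintype.piFinset fun _ : Fin l => Finset.Icc 3 (k + 2)).filter
        (fun n => ∑ i, (n i - 2) = j),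
      ∏ i, kt d γ r ξ (n i) / ((n i).factorial : ℝ)

/-! ### Auxiliary combinatorics: cardinality of `antidiagonalTuple` -/

lemma aux_list_sum_range (f : ℕ → ℕ) (n : ℕ) :
    ((List.range n).map f).sum = ∑ i ∈ Finset.range n, f i := rfl

lemma aux_hockey (k n : ℕ) :
    ∑ b ∈ Finset.range (n+1), (b+k).choose k = (n+k+1).choose (k+1) := by
  induction n with
  | zero => simp
  | succ n ih =>
    rw [Finset.sum_range_succ, ih, show n+1+k = n+k+1 by omega, Nat.choose_succ_succ' (n+k+1) k]
    omega

lemma aux_len_adt : ∀ k n, (List.Nat.antidiagonalTuple (k+1) n).length = (n + k).choose k := by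
  intro k
  induction k with
  | zero => intro n; rw [List.Nat.antidiagonalTuple_one]; simp
  | succ k ih =>
    intro n
    rw [show List.Nat.antidiagonalTuple (k+2) n =
      (List.Nat.antidiagonal n).flatMap (fun ni =>
        (List.Nat.antidiagonalTuple (k+1) ni.2).map (Fin.cons ni.1)) from rfl]
    rw [List.length_flatMap]
    rw [show List.Nat.antidiagonal n = (List.range (n+1)).map (fun i => (i, n-i)) from rfl]
    rw [List.map_map, aux_list_sum_range]
    simp only [Function.comp, List.length_map, ih]
    have h1 : ∑ i ∈ Finset.range (n+1), ((n-i)+k).choose k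
        = ∑ i ∈ Finset.range (n+1), (i+k).choose k := by
      rw [← Finset.sum_range_reflect]
      apply Finset.sum_congr rfl
      intro i hi
      simp only [Finset.mem_range] at hi
      congr 2
      omega
    rw [h1, aux_hockey, show n+(k+1) = n+k+1 by omega]

lemma aux_card_adt (k n : ℕ) :
    (Finset.Nat.antidiagonalTuple (k+1) n).card = (n + k).choose k :=
  aux_len_adt k n

lemma aux_card_adt' {l : ℕ} (hl : 1 ≤ l) (j : ℕ) :
    (Finset.Nat.antidiagonalTuple l j).card = (j + l - 1).choose j := by
  obtain ⟨l', rfl⟩ : ∃ l', l = l'+1 := ⟨l-1, by omega⟩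
  rw [aux_card_adt, show j + (l'+1) - 1 = j + l' by omega]
  have h := Nat.choose_symm (show l' ≤ j + l' by omega)
  rw [show j + l' - l' = j by omega] at h
  exact h.symm

/-! ### Auxiliary analysis: integration by parts inequality -/

lemma aux_cont_rpow {q : ℝ} (hq : 0 < q) : Continuous (fun u : ℝ => u ^ q) := by
  rw [continuous_iff_continuousAt]
  intro x
  exact Real.continuousAt_rpow_const x q (Or.inr hq.le)

lemma aux_ibp_ineq {a p : ℝ} (hp : 1 < p) :
    a * ∫ u in (0:ℝ)..1, Real.exp (-(a*u)) * u ^ p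
      ≤ p * ∫ u in (0:ℝ)..1, Real.exp (-(a*u)) * u ^ (p-1) := by
  have hp0 : (0:ℝ) < p := by linarith
  have hp1 : (0:ℝ) < p - 1 := by linarith
  set f : ℝ → ℝ := fun u => Real.exp (-(a*u)) * u ^ p with hf
  have hderiv : ∀ u : ℝ, HasDerivAt f
      (Real.exp (-(a*u)) * (-a) * u ^ p + Real.exp (-(a*u)) * (p * u ^ (p-1))) u := by
    intro u
    have hlin : HasDerivAt (fun u : ℝ => -(a*u)) (-a) u := by
      simpa using (hasDerivAt_id u).const_mul (-a)
    have hexp := hlin.exp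
    have hpow : HasDerivAt (fun x : ℝ => x ^ p) (p * u ^ (p-1)) u :=
      Real.hasDerivAt_rpow_const (Or.inr hp.le)
    exact hexp.mul hpow
  have hce : Continuous (fun u : ℝ => Real.exp (-(a*u))) := by fun_prop
  have hcd : Continuous (fun u : ℝ =>
      Real.exp (-(a*u)) * (-a) * u ^ p + Real.exp (-(a*u)) * (p * u ^ (p-1))) := by
    apply Continuous.add
    · exact (hce.mul continuous_const).mul (aux_cont_rpow hp0)
    · exact hce.mul (continuous_const.mul (aux_cont_rpow hp1))
  have hint := intervalIntegral.integral_eq_sub_of_hasDerivAt (f := f)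
    (fun x _ => hderiv x) (hcd.intervalIntegrable 0 1)
  have hf1 : f 1 = Real.exp (-a) := by simp [hf]
  have hf0 : f 0 = 0 := by simp [hf, Real.zero_rpow (ne_of_gt hp0)]
  rw [hf1, hf0, sub_zero] at hint
  have hsplit : (∫ u in (0:ℝ)..1,
      (Real.exp (-(a*u)) * (-a) * u ^ p + Real.exp (-(a*u)) * (p * u ^ (p-1))))
      = (-a) * (∫ u in (0:ℝ)..1, Real.exp (-(a*u)) * u ^ p)
        + p * (∫ u in (0:ℝ)..1, Real.exp (-(a*u)) * u ^ (p-1)) := by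
    rw [intervalIntegral.integral_add
      (by exact ((hce.mul continuous_const).mul (aux_cont_rpow hp0)).intervalIntegrable 0 1 :
        IntervalIntegrable (fun u => Real.exp (-(a*u)) * (-a) * u ^ p) volume 0 1)
      (by exact (hce.mul (continuous_const.mul (aux_cont_rpow hp1))).intervalIntegrable 0 1 :
        IntervalIntegrable (fun u => Real.exp (-(a*u)) * (p * u ^ (p-1))) volume 0 1)]
    rw [← intervalIntegral.integral_const_mul, ← intervalIntegral.integral_const_mul]
    congr 1
    · apply intervalIntegral.integral_congr; intro u _; ring
    · apply intervalIntegral.integral_congr; intro u _; ring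
  rw [hsplit] at hint
  nlinarith [Real.exp_pos (-a)]

/-! ### Bounds on `kt` -/

lemma rho_pos (d : ℕ) {r : ℝ} (hr : 1 ≤ r) : 0 < rho d r :=
  Real.rpow_pos_of_pos (by linarith) _

lemma kt_eq (d : ℕ) (γ r ζ : ℝ) (hρ : rho d r ≠ 0) (n : ℕ) :
    kt d γ r (-ζ) n = (2 - (d:ℝ)/γ) *
      ∫ u in (0:ℝ)..1, Real.exp (-((ζ/rho d r)*u)) * u ^ ((n:ℝ) - 1 - (d:ℝ)/γ) := by
  unfold kt
  congr 1
  refine intervalIntegral.integral_congr fun u _ => ?_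
  rw [show -ζ * u / rho d r = -((ζ/rho d r)*u) by ring]

lemma integrand_nonneg (b q : ℝ) :
    0 ≤ ∫ u in (0:ℝ)..1, Real.exp (-(b*u)) * u ^ q := by
  apply intervalIntegral.integral_nonneg (by norm_num)
  intro u hu
  exact mul_nonneg (Real.exp_pos _).le (Real.rpow_nonneg hu.1 _)

lemma kt_nonneg (d : ℕ) {γ : ℝ} (hγ : (d:ℝ) < γ) (hγ0 : 0 < γ) (r ζ : ℝ)
    (hρ : rho d r ≠ 0) (n : ℕ) : 0 ≤ kt d γ r (-ζ) n := by
  rw [kt_eq d γ r ζ hρ n]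
  have hc : (d:ℝ)/γ < 1 := (div_lt_one hγ0).mpr hγ
  exact mul_nonneg (by linarith) (integrand_nonneg _ _)

lemma kt_rec (d : ℕ) {γ : ℝ} (hγ : (d:ℝ) < γ) (hγ0 : 0 < γ) {r : ℝ} (hr : 1 ≤ r)
    (ζ : ℝ) {n : ℕ} (hn : 2 ≤ n) :
    (ζ / rho d r) * kt d γ r (-ζ) (n+1) ≤ ((n:ℝ)+1) * kt d γ r (-ζ) n := by
  have hρ : rho d r ≠ 0 := (rho_pos d hr).ne'
  have hc : (d:ℝ)/γ < 1 := (div_lt_one hγ0).mpr hγ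
  have hc0 : 0 ≤ (d:ℝ)/γ := div_nonneg (Nat.cast_nonneg d) hγ0.le
  set a := ζ / rho d r
  set c := (d:ℝ)/γ
  set p := (n:ℝ) - c with hpdef
  have hp : 1 < p := by
    have : (2:ℝ) ≤ (n:ℝ) := by exact_mod_cast hn
    simp only [hpdef]; linarith
  rw [kt_eq d γ r ζ hρ (n+1), kt_eq d γ r ζ hρ n]
  have he1 : ((n+1:ℕ):ℝ) - 1 - c = p := by push_cast; ring
  have he2 : ((n:ℕ):ℝ) - 1 - c = p - 1 := by push_cast; ring
  rw [he1, he2]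
  have hibp := aux_ibp_ineq (a := a) hp
  have hI : 0 ≤ ∫ u in (0:ℝ)..1, Real.exp (-(a*u)) * u ^ (p-1) := integrand_nonneg a (p-1)
  have hpn : p ≤ (n:ℝ) + 1 := by simp only [hpdef]; linarith
  have hd1 : (0:ℝ) < 2 - c := by linarith
  nlinarith [mul_le_mul_of_nonneg_right hpn hI]

lemma kt_le (d : ℕ) {γ : ℝ} (hγ : (d:ℝ) < γ) (hγ0 : 0 < γ) {r : ℝ} (hr : 1 ≤ r)
    {ζ : ℝ} (hζ : 0 < ζ) :
    ∀ n, 2 ≤ n → kt d γ r (-ζ) n ≤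
      kt d γ r (-ζ) 2 * (n.factorial : ℝ) * ((ζ / rho d r)⁻¹) ^ (n - 2) := by
  have hρpos := rho_pos d hr
  have hρ : rho d r ≠ 0 := hρpos.ne'
  have ha : 0 < ζ / rho d r := div_pos hζ hρpos
  set a := ζ / rho d r
  intro n hn
  induction n, hn using Nat.le_induction with
  | base =>
    have h2 := kt_nonneg d hγ hγ0 r ζ hρ 2
    simp only [Nat.sub_self, pow_zero, mul_one]
    norm_num
    linarith
  | succ n hn ih =>
    have hrec := kt_rec d hγ hγ0 hr ζ hn
    have hk2 := kt_nonneg d hγ hγ0 r ζ hρ 2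
    have hstep : kt d γ r (-ζ) (n+1) ≤ ((n:ℝ)+1) * kt d γ r (-ζ) n / a := by
      rw [le_div_iff₀ ha]
      linarith [hrec]
    calc kt d γ r (-ζ) (n+1) ≤ ((n:ℝ)+1) * kt d γ r (-ζ) n / a := hstep
      _ ≤ ((n:ℝ)+1) * (kt d γ r (-ζ) 2 * (n.factorial : ℝ) * (a⁻¹) ^ (n - 2)) / a := by
          gcongr
      _ = kt d γ r (-ζ) 2 * ((n+1).factorial : ℝ) * (a⁻¹) ^ (n + 1 - 2) := by
          rw [show n + 1 - 2 = (n - 2) + 1 by omega, pow_succ, Nat.factorial_succ]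
          push_cast
          field_simp

/-- Lemma 3.12 (lower tail, ξ = −ζ): c̃_{j,ℓ} ≤ κ̃₂^ℓ (ζ/ρ)^{−j} (j+ℓ−1)!/(ℓ!(ℓ−1)!j!). -/
theorem ctilde_lower_bound (d : ℕ) (hd : 1 ≤ d) (γ : ℝ) (hγ : (d : ℝ) < γ)
    (r : ℝ) (hr : 1 ≤ r) (ζ : ℝ) (hζ : 0 < ζ) (k : ℕ) (hk : 1 ≤ k)
    (j l : ℕ) (hl : 1 ≤ l) (hlj : l ≤ j) :
    ctilde d γ r (-ζ) k j l ≤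
      (kt d γ r (-ζ) 2) ^ l * (ζ / rho d r) ^ (-(j : ℝ)) *
        ((j + l - 1).factorial : ℝ) /
          ((l.factorial : ℝ) * ((l - 1).factorial : ℝ) * (j.factorial : ℝ)) := by
  have hγ0 : 0 < γ := lt_of_le_of_lt (by exact_mod_cast Nat.zero_le d) hγ
  have hρpos := rho_pos d hr
  have hρ : rho d r ≠ 0 := hρpos.ne'
  have ha : 0 < ζ / rho d r := div_pos hζ hρpos
  set a := ζ / rho d r with hadef
  set S := (Fintype.piFinset fun _ : Fin l => Finset.Icc 3 (k + 2)).filter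
      (fun n => ∑ i, (n i - 2) = j) with hS
  have hk2 := kt_nonneg d hγ hγ0 r ζ hρ 2
  set B := (kt d γ r (-ζ) 2) ^ l * (a⁻¹) ^ j with hB
  have hBnn : 0 ≤ B := by positivity
  -- each term of the sum is at most B
  have hterm : ∀ n ∈ S, (∏ i, kt d γ r (-ζ) (n i) / ((n i).factorial : ℝ)) ≤ B := by
    intro n hn
    rw [hS, Finset.mem_filter] at hn
    obtain ⟨hn1, hn2⟩ := hn
    rw [Fintype.mem_piFinset] at hn1
    have h3 : ∀ i, 3 ≤ n i := fun i => (Finset.mem_Icc.mp (hn1 i)).1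
    have hfac : ∀ i, kt d γ r (-ζ) (n i) / ((n i).factorial : ℝ)
        ≤ kt d γ r (-ζ) 2 * (a⁻¹) ^ (n i - 2) := by
      intro i
      have := kt_le d hγ hγ0 hr hζ (n i) (by have := h3 i; omega)
      rw [div_le_iff₀ (by positivity : (0:ℝ) < ((n i).factorial : ℝ))]
      calc kt d γ r (-ζ) (n i)
          ≤ kt d γ r (-ζ) 2 * ((n i).factorial : ℝ) * (a⁻¹) ^ (n i - 2) := this
        _ = kt d γ r (-ζ) 2 * (a⁻¹) ^ (n i - 2) * ((n i).factorial : ℝ) := by ring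
    calc (∏ i, kt d γ r (-ζ) (n i) / ((n i).factorial : ℝ))
        ≤ ∏ i, kt d γ r (-ζ) 2 * (a⁻¹) ^ (n i - 2) := by
          apply Finset.prod_le_prod
          · intro i _
            exact div_nonneg (kt_nonneg d hγ hγ0 r ζ hρ _) (by positivity)
          · intro i _
            exact hfac i
      _ = (kt d γ r (-ζ) 2) ^ l * ∏ i, (a⁻¹) ^ (n i - 2) := by
          rw [Finset.prod_mul_distrib, Finset.prod_const]
          simp
      _ = B := by
          rw [hB, Finset.prod_pow_eq_pow_sum, hn2]
  -- cardinality bound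
  have hcard : S.card ≤ (j + l - 1).choose j := by
    have hinj : S.card ≤ (Finset.Nat.antidiagonalTuple l j).card := by
      apply Finset.card_le_card_of_injOn (fun n i => n i - 2)
      · intro n hn
        have hn' := Finset.mem_filter.mp hn
        rw [Finset.mem_coe, Finset.Nat.mem_antidiagonalTuple]
        exact hn'.2
      · intro n hn m hm hnm
        have hn' := Finset.mem_filter.mp (Finset.mem_coe.mp hn)
        have hm' := Finset.mem_filter.mp (Finset.mem_coe.mp hm)
        rw [Fintype.mem_piFinset] at hn' hm'
        funext i
        have h3n : 3 ≤ n i := (Finset.mem_Icc.mp (hn'.1 i)).1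
        have h3m : 3 ≤ m i := (Finset.mem_Icc.mp (hm'.1 i)).1
        have := congrFun hnm i
        simp only at this
        omega
    rw [aux_card_adt' hl j] at hinj
    exact hinj
  -- assemble
  have hsum : (∑ n ∈ S, ∏ i, kt d γ r (-ζ) (n i) / ((n i).factorial : ℝ))
      ≤ (S.card : ℝ) * B := by
    calc (∑ n ∈ S, ∏ i, kt d γ r (-ζ) (n i) / ((n i).factorial : ℝ))
        ≤ ∑ _n ∈ S, B := Finset.sum_le_sum hterm
      _ = (S.card : ℝ) * B := by rw [Finset.sum_const, nsmul_eq_mul]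
  have hchoose : ((j + l - 1).choose j : ℝ)
      = ((j + l - 1).factorial : ℝ) / ((j.factorial : ℝ) * ((l-1).factorial : ℝ)) := by
    rw [Nat.cast_choose ℝ (show j ≤ j + l - 1 by omega),
      show j + l - 1 - j = l - 1 by omega]
  have hrpow : (a : ℝ) ^ (-(j : ℝ)) = (a⁻¹) ^ j := by
    rw [Real.rpow_neg ha.le, Real.rpow_natCast, inv_pow]
  have hfl : (0:ℝ) < (l.factorial : ℝ) := by positivity
  have hcardB : (S.card : ℝ) * B ≤ ((j + l - 1).choose j : ℝ) * B := by
    apply mul_le_mul_of_nonneg_right _ hBnn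
    exact_mod_cast hcard
  rw [ctilde]
  calc (1 / (l.factorial : ℝ)) *
        ∑ n ∈ S, ∏ i, kt d γ r (-ζ) (n i) / ((n i).factorial : ℝ)
      ≤ (1 / (l.factorial : ℝ)) * (((j + l - 1).choose j : ℝ) * B) := by
        apply mul_le_mul_of_nonneg_left (hsum.trans hcardB) (by positivity)
    _ = (kt d γ r (-ζ) 2) ^ l * a ^ (-(j : ℝ)) *
        ((j + l - 1).factorial : ℝ) /
          ((l.factorial : ℝ) * ((l - 1).factorial : ℝ) * (j.factorial : ℝ)) := by
        rw [hchoose, hrpow, hB]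
        have h1 : ((l-1).factorial : ℝ) ≠ 0 := by positivity
        have h2 : (j.factorial : ℝ) ≠ 0 := by positivity
        field_simp
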